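/- arXiv:1307.2834 — 2 statements merged into one kernel-verified Lean document; each statement's English description precedes it below -/
import Mathlib

section
/- Let s < -2 be a real number and let N ≥ 2 be an even integer. Then the minimal average standardized Riesz pair-energy equals v_s(N) = (1/s)·((2^{-s-1} - 1)·N + 1)/(N - 1), equivalently v_s(N) = -(1/|s|)·((2^{|s|-1} - 1)·N + 1)/(N - 1). -/
open scoped BigOperators

/-- The standardized Riesz pair-energy `V_s(r) = (r^{-s} - 1)/s` for `s ≠ 0`,
and `V_0(r) = -log r`. -/
noncomputable def Vpair (s r : ℝ) : ℝ := if s = 0 then -Real.log r else (r ^ (-s) - 1) / s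

/-- The average standardized Riesz pair-energy of an `N`-point configuration on the
unit sphere `S² ⊂ ℝ³`. -/
noncomputable def avgE (s : ℝ) (N : ℕ) (q : Fin N → EuclideanSpace ℝ (Fin 3)) : ℝ :=
  2 / ((N : ℝ) * ((N : ℝ) - 1)) *
    ∑ i : Fin N, ∑ j : Fin N, if i < j then Vpair s ‖q i - q j‖ else 0

/-- The minimal average standardized Riesz pair-energy `v_s(N)`: the infimum of the
average pair-energy over all configurations of `N` pairwise distinct points on `S²`. -/
noncomputable def vmin (s : ℝ) (N : ℕ) : ℝ :=
  sInf { E : ℝ | ∃ q : Fin N → EuclideanSpace ℝ (Fin 3),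
    (∀ i, ‖q i‖ = 1) ∧ Function.Injective q ∧ E = avgE s N q }

open Real Finset

section Aux

lemma sum_ind_lt (n : ℕ) :
    ∑ i : Fin n, ∑ j : Fin n, (if i < j then (1:ℝ) else 0) = n * (n - 1) / 2 := by
  have hsw : (∑ i : Fin n, ∑ j : Fin n, (if i < j then (1:ℝ) else 0))
      = ∑ i : Fin n, ∑ j : Fin n, (if j < i then (1:ℝ) else 0) := by
    rw [Finset.sum_comm]
  have key : (∑ i : Fin n, ∑ j : Fin n, (if i < j then (1:ℝ) else 0)) * 2
      = n * n - n := by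
    calc (∑ i : Fin n, ∑ j : Fin n, (if i < j then (1:ℝ) else 0)) * 2
        = (∑ i : Fin n, ∑ j : Fin n, (if i < j then (1:ℝ) else 0))
          + (∑ i : Fin n, ∑ j : Fin n, (if j < i then (1:ℝ) else 0)) := by
          rw [← hsw]; ring
      _ = ∑ i : Fin n, ∑ j : Fin n, ((if i < j then (1:ℝ) else 0) + (if j < i then (1:ℝ) else 0)) := by
          simp only [← Finset.sum_add_distrib]
      _ = ∑ i : Fin n, ∑ j : Fin n, (if i = j then (0:ℝ) else 1) := by
          apply Finset.sum_congr rfl; intro i _; apply Finset.sum_congr rfl; intro j _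
          rcases lt_trichotomy i j with h|h|h
          · simp [h, asymm h, h.ne]
          · simp [h]
          · simp [h, asymm h, h.ne']
      _ = ∑ i : Fin n, ((n:ℝ) - 1) := by
          apply Finset.sum_congr rfl; intro i _
          have h1 : (∑ j : Fin n, (if i = j then (0:ℝ) else 1))
              = (∑ j : Fin n, (1:ℝ)) - ∑ j : Fin n, (if i = j then (1:ℝ) else 0) := by
            rw [← Finset.sum_sub_distrib]
            apply Finset.sum_congr rfl; intro j _; split_ifs <;> ring
          rw [h1, Finset.sum_ite_eq]
          simp
      _ = n * n - n := by
          simp [Finset.sum_const]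
  linear_combination key / 2

lemma sum_ind_left (M : ℕ) :
    ∑ i : Fin (M + M), (if i.val < M then (1:ℝ) else 0) = M := by
  rw [Fin.sum_univ_eq_sum_range (fun k => if k < M then (1:ℝ) else 0) (M+M)]
  rw [Finset.sum_ite, Finset.sum_const, Finset.sum_const]
  have : (Finset.range (M+M)).filter (· < M) = Finset.range M := by
    ext k; simp [Finset.mem_filter, Finset.mem_range]; omega
  simp [this]

lemma sum_ind_right (M : ℕ) :
    ∑ i : Fin (M + M), (if M ≤ i.val then (1:ℝ) else 0) = M := by
  rw [Fin.sum_univ_eq_sum_range (fun k => if M ≤ k then (1:ℝ) else 0) (M+M)]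
  rw [Finset.sum_ite, Finset.sum_const, Finset.sum_const]
  have : (Finset.range (M+M)).filter (M ≤ ·) = Finset.Ico M (M+M) := by
    ext k; simp [Finset.mem_filter, Finset.mem_range, Finset.mem_Ico]; omega
  simp [this]

lemma key_pt (M : ℕ) (A B : ℝ) (i j : Fin (M+M)) :
      (if i < j then (if (i.val < M) = (j.val < M) then A else B) else 0)
      = A * (if i < j then (1:ℝ) else 0)
        + (B - A) * ((if i.val < M then (1:ℝ) else 0) * (if M ≤ j.val then (1:ℝ) else 0)) := by
  by_cases h1 : i < j
  · by_cases h2 : i.val < M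
    · by_cases h3 : j.val < M
      · simp [h1, h2, h3, not_le.mpr h3]
      · simp [h1, h2, h3, not_lt.mp h3]
        try ring
    · by_cases h3 : j.val < M
      · exfalso; rw [Fin.lt_def] at h1; omega
      · simp [h1, h2, h3]
  · by_cases h2 : i.val < M
    · by_cases h3 : M ≤ j.val
      · exfalso; exact h1 (by rw [Fin.lt_def]; omega)
      · simp [h1, h2, h3]
    · simp [h1, h2]

lemma count_sum (M : ℕ) (A B : ℝ) :
    ∑ i : Fin (M+M), ∑ j : Fin (M+M),
      (if i < j then (if (i.val < M) = (j.val < M) then A else B) else 0)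
    = A * (((M:ℝ)+M) * (((M:ℝ)+M) - 1) / 2) + (B - A) * (M * M) := by
  simp only [key_pt]
  simp only [Finset.sum_add_distrib, ← Finset.mul_sum]
  rw [← Finset.sum_mul, sum_ind_left, sum_ind_right, sum_ind_lt]
  push_cast
  ring

end Aux

section Geometry

noncomputable def cpt (θ : ℝ) : EuclideanSpace ℝ (Fin 3) := !₂[Real.sin θ, 0, Real.cos θ]
noncomputable def dpt (θ : ℝ) : EuclideanSpace ℝ (Fin 3) := !₂[-Real.sin θ, 0, -Real.cos θ]

lemma cpt_norm (a : ℝ) : ‖cpt a‖ = 1 := by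
  rw [EuclideanSpace.norm_eq, Fin.sum_univ_three]
  simp [cpt, Real.norm_eq_abs, sq_abs]

lemma dpt_norm (a : ℝ) : ‖dpt a‖ = 1 := by
  rw [EuclideanSpace.norm_eq, Fin.sum_univ_three]
  simp [dpt, Real.norm_eq_abs, sq_abs]

lemma norm_cc (a b : ℝ) : ‖cpt a - cpt b‖ = Real.sqrt (2 - 2 * Real.cos (a - b)) := by
  rw [EuclideanSpace.norm_eq, Fin.sum_univ_three]
  simp only [cpt, PiLp.sub_apply, Matrix.cons_val_zero, Matrix.cons_val_one, Matrix.head_cons,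
    Real.norm_eq_abs, sq_abs, Matrix.cons_val_two, Matrix.tail_cons, PiLp.toLp_apply]
  rw [Real.cos_sub]
  congr 1
  nlinarith [sin_sq_add_cos_sq a, sin_sq_add_cos_sq b]

lemma norm_dd (a b : ℝ) : ‖dpt a - dpt b‖ = Real.sqrt (2 - 2 * Real.cos (a - b)) := by
  rw [EuclideanSpace.norm_eq, Fin.sum_univ_three]
  simp only [dpt, PiLp.sub_apply, Matrix.cons_val_zero, Matrix.cons_val_one, Matrix.head_cons,
    Real.norm_eq_abs, sq_abs, Matrix.cons_val_two, Matrix.tail_cons, PiLp.toLp_apply]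
  rw [Real.cos_sub]
  congr 1
  nlinarith [sin_sq_add_cos_sq a, sin_sq_add_cos_sq b]

lemma norm_cd (a b : ℝ) : ‖cpt a - dpt b‖ = Real.sqrt (2 + 2 * Real.cos (a - b)) := by
  rw [EuclideanSpace.norm_eq, Fin.sum_univ_three]
  simp only [cpt, dpt, PiLp.sub_apply, Matrix.cons_val_zero, Matrix.cons_val_one, Matrix.head_cons,
    Real.norm_eq_abs, sq_abs, Matrix.cons_val_two, Matrix.tail_cons, PiLp.toLp_apply]
  rw [Real.cos_sub]
  congr 1
  nlinarith [sin_sq_add_cos_sq a, sin_sq_add_cos_sq b]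

lemma norm_dc (a b : ℝ) : ‖dpt a - cpt b‖ = Real.sqrt (2 + 2 * Real.cos (a - b)) := by
  rw [EuclideanSpace.norm_eq, Fin.sum_univ_three]
  simp only [cpt, dpt, PiLp.sub_apply, Matrix.cons_val_zero, Matrix.cons_val_one, Matrix.head_cons,
    Real.norm_eq_abs, sq_abs, Matrix.cons_val_two, Matrix.tail_cons, PiLp.toLp_apply]
  rw [Real.cos_sub]
  congr 1
  nlinarith [sin_sq_add_cos_sq a, sin_sq_add_cos_sq b]

noncomputable def cfg (M : ℕ) (δ : ℝ) : Fin (M + M) → EuclideanSpace ℝ (Fin 3) :=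
  fun i => if i.val < M then cpt (δ * i.val) else dpt (δ * ((i.val - M : ℕ) : ℝ))

noncomputable def theta (M : ℕ) (i : Fin (M + M)) : ℝ :=
  if i.val < M then (i.val : ℝ) else ((i.val - M : ℕ) : ℝ)

lemma cfg_norm (M : ℕ) (δ : ℝ) (i : Fin (M+M)) : ‖cfg M δ i‖ = 1 := by
  unfold cfg; split_ifs
  · exact cpt_norm _
  · exact dpt_norm _

lemma cfg_dist (M : ℕ) (δ : ℝ) (i j : Fin (M+M)) :
    ‖cfg M δ i - cfg M δ j‖
    = Real.sqrt (2 + (if (i.val < M) = (j.val < M) then (-2:ℝ) else 2)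
        * Real.cos (δ * (theta M i - theta M j))) := by
  unfold cfg theta
  by_cases h2 : i.val < M <;> by_cases h3 : j.val < M <;>
    simp only [h2, h3, if_true, if_false, eq_self_iff_true]
  · rw [norm_cc, show δ * (i.val:ℝ) - δ * (j.val:ℝ) = δ * ((i.val:ℝ) - (j.val:ℝ)) from by ring]
    congr 1
    ring
  · rw [norm_cd, show δ * (i.val:ℝ) - δ * (((j.val - M : ℕ)):ℝ)
        = δ * ((i.val:ℝ) - (((j.val - M : ℕ)):ℝ)) from by ring]
    congr 1
  · rw [norm_dc, show δ * (((i.val - M : ℕ)):ℝ) - δ * ((j.val):ℝ)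
        = δ * ((((i.val - M : ℕ)):ℝ) - ((j.val):ℝ)) from by ring]
    congr 1
  · rw [norm_dd, show δ * (((i.val - M : ℕ)):ℝ) - δ * (((j.val - M : ℕ)):ℝ)
        = δ * ((((i.val - M : ℕ)):ℝ) - (((j.val - M : ℕ)):ℝ)) from by ring]
    congr 1
    ring

lemma cfg_inj (M : ℕ) (δ : ℝ) (h0 : 0 < δ) (h1 : δ * M ≤ π / 2) :
    Function.Injective (cfg M δ) := by
  have hang : ∀ k : ℕ, k < M → 0 ≤ δ * k ∧ δ * k < π / 2 := by
    intro k hk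
    constructor
    · positivity
    · calc δ * k < δ * M := by
            apply mul_lt_mul_of_pos_left _ h0
            exact_mod_cast hk
        _ ≤ π / 2 := h1
  intro i j hij
  have h2 : cfg M δ i 2 = cfg M δ j 2 := by rw [hij]
  unfold cfg at h2
  by_cases hi : i.val < M <;> by_cases hj : j.val < M <;>
    simp only [hi, hj, if_true, if_false, cpt, dpt, Matrix.cons_val_two, Matrix.tail_cons,
      Matrix.head_cons, PiLp.toLp_apply] at h2
  · have m1 := hang i.val hi
    have m2 := hang j.val hj
    have := Real.injOn_cos ⟨m1.1, by linarith [Real.pi_pos]⟩ ⟨m2.1, by linarith [Real.pi_pos]⟩ h2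
    have hval : (i.val : ℝ) = j.val := mul_left_cancel₀ h0.ne' this
    exact Fin.ext (by exact_mod_cast hval)
  · have m1 := hang i.val hi
    have m2 := hang (j.val - M) (by omega)
    have c1 : 0 < Real.cos (δ * i.val) := Real.cos_pos_of_mem_Ioo ⟨by linarith [Real.pi_pos], m1.2⟩
    have c2 : 0 < Real.cos (δ * ((j.val - M : ℕ) : ℝ)) :=
      Real.cos_pos_of_mem_Ioo ⟨by linarith [Real.pi_pos], m2.2⟩
    linarith
  · have m1 := hang (i.val - M) (by omega)
    have m2 := hang j.val hj
    have c1 : 0 < Real.cos (δ * ((i.val - M : ℕ) : ℝ)) :=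
      Real.cos_pos_of_mem_Ioo ⟨by linarith [Real.pi_pos], m1.2⟩
    have c2 : 0 < Real.cos (δ * j.val) := Real.cos_pos_of_mem_Ioo ⟨by linarith [Real.pi_pos], m2.2⟩
    linarith
  · have m1 := hang (i.val - M) (by omega)
    have m2 := hang (j.val - M) (by omega)
    have h2' : Real.cos (δ * ((i.val - M : ℕ) : ℝ)) = Real.cos (δ * ((j.val - M : ℕ) : ℝ)) := by
      linarith
    have := Real.injOn_cos ⟨m1.1, by linarith [Real.pi_pos]⟩ ⟨m2.1, by linarith [Real.pi_pos]⟩ h2'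
    have hval : ((i.val - M : ℕ) : ℝ) = ((j.val - M : ℕ) : ℝ) := mul_left_cancel₀ h0.ne' this
    have : i.val - M = j.val - M := by exact_mod_cast hval
    exact Fin.ext (by omega)

end Geometry

section VpairFacts

lemma contVsqrt (s : ℝ) (hs0 : s ≠ 0) (hsneg : 0 ≤ -s) (e m : ℝ) :
    Continuous fun δ : ℝ => Vpair s (Real.sqrt (2 + e * Real.cos (δ * m))) := by
  have h : (fun δ : ℝ => Vpair s (Real.sqrt (2 + e * Real.cos (δ * m))))
      = fun δ : ℝ => ((Real.sqrt (2 + e * Real.cos (δ * m))) ^ (-s) - 1) / s := by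
    funext δ; rw [Vpair, if_neg hs0]
  rw [h]
  apply Continuous.div_const
  apply Continuous.sub _ continuous_const
  apply Continuous.rpow_const
  · apply Real.continuous_sqrt.comp
    exact continuous_const.add (continuous_const.mul (Real.continuous_cos.comp
      (continuous_id.mul continuous_const)))
  · intro x; exact Or.inr hsneg

lemma Vpair_zero (s : ℝ) (hs0 : s ≠ 0) : Vpair s 0 = -1 / s := by
  rw [Vpair, if_neg hs0, Real.zero_rpow (neg_ne_zero.mpr hs0)]
  ring

lemma Vpair_two (s : ℝ) (hs0 : s ≠ 0) : Vpair s 2 = ((2:ℝ) ^ (-s) - 1) / s := by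
  rw [Vpair, if_neg hs0]

end VpairFacts

section LowerBound

lemma lower_bound (s : ℝ) (hs : s < -2) (n : ℕ) (hn : 2 ≤ n)
    (q : Fin n → EuclideanSpace ℝ (Fin 3)) (hq : ∀ i, ‖q i‖ = 1) :
    (1 / s) * (((2:ℝ) ^ (-s - 1) - 1) * n + 1) / ((n:ℝ) - 1) ≤ avgE s n q := by
  have hs0 : s ≠ 0 := by linarith
  have ht : (0:ℝ) < -s := by linarith
  have hncast : (2:ℝ) ≤ (n:ℝ) := by exact_mod_cast hn
  have hn1 : (1:ℝ) ≤ (n:ℝ) - 1 := by linarith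
  set X : ℝ := (2:ℝ) ^ (-s - 2) with hX
  have hXpos : 0 < X := Real.rpow_pos_of_pos two_pos _
  have pair : ∀ i j : Fin n, (1 - X * ‖q i - q j‖^2) / (-s) ≤ Vpair s ‖q i - q j‖ := by
    intro i j
    set r := ‖q i - q j‖ with hr
    have hr0 : (0:ℝ) ≤ r := norm_nonneg _
    have hr2 : r ≤ 2 := by
      calc r ≤ ‖q i‖ + ‖q j‖ := norm_sub_le _ _
        _ = 2 := by rw [hq i, hq j]; norm_num
    have key : r ^ (-s) ≤ X * r ^ 2 := by
      rcases eq_or_lt_of_le hr0 with h0 | h0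
      · rw [← h0, Real.zero_rpow (by linarith : -s ≠ 0)]
        simp
      · have hsplit : r ^ (-s) = r ^ (2:ℝ) * r ^ (-s - 2) := by
          rw [← Real.rpow_add h0]; ring_nf
        rw [hsplit]
        have h1 : r ^ (-s - 2) ≤ (2:ℝ) ^ (-s - 2) :=
          Real.rpow_le_rpow hr0 hr2 (by linarith)
        have h2 : r ^ (2:ℝ) = r ^ 2 := by
          rw [Real.rpow_two]
        rw [h2]
        nlinarith [sq_nonneg r, Real.rpow_nonneg hr0 (-s - 2)]
    rw [Vpair, if_neg hs0]
    have hrw : (r ^ (-s) - 1) / s = (1 - r ^ (-s)) / (-s) := by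
      rw [div_neg, ← neg_div, neg_sub]
    rw [hrw, div_le_div_iff_of_pos_right ht]
    linarith
  set T : ℝ := ∑ i : Fin n, ∑ j : Fin n, (if i < j then ‖q i - q j‖^2 else 0) with hTdef
  have hTbound : T ≤ (n:ℝ)^2 := by
    have hsw : (∑ i : Fin n, ∑ j : Fin n, (if j < i then ‖q i - q j‖^2 else 0)) = T := by
      rw [hTdef, Finset.sum_comm]
      apply Finset.sum_congr rfl; intro i _; apply Finset.sum_congr rfl; intro j _
      split_ifs with h
      · rw [norm_sub_rev]
      · rfl
    have hfull : T + T = ∑ i : Fin n, ∑ j : Fin n, ‖q i - q j‖^2 := by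
      nth_rewrite 2 [← hsw]
      rw [hTdef]
      simp only [← Finset.sum_add_distrib]
      apply Finset.sum_congr rfl; intro i _; apply Finset.sum_congr rfl; intro j _
      rcases lt_trichotomy i j with h | h | h
      · simp [h, asymm h]
      · simp [h, sub_self]
      · simp [h, asymm h]
    have hinner : ∑ i : Fin n, ∑ j : Fin n, ‖q i - q j‖^2 ≤ 2 * (n:ℝ)^2 := by
      have expand : ∀ i j : Fin n, ‖q i - q j‖^2 = 2 - 2 * (inner ℝ (q i) (q j) : ℝ) := by
        intro i j
        rw [norm_sub_sq_real]
        rw [hq i, hq j]; ring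
      calc ∑ i : Fin n, ∑ j : Fin n, ‖q i - q j‖^2
          = ∑ i : Fin n, ∑ j : Fin n, (2 - 2 * (inner ℝ (q i) (q j) : ℝ)) := by
            apply Finset.sum_congr rfl; intro i _; apply Finset.sum_congr rfl; intro j _
            exact expand i j
        _ = 2 * (n:ℝ)^2 - 2 * ∑ i : Fin n, ∑ j : Fin n, (inner ℝ (q i) (q j) : ℝ) := by
            simp only [Finset.sum_sub_distrib, ← Finset.mul_sum, Finset.sum_const,
              Finset.card_univ, Fintype.card_fin, nsmul_eq_mul]
            ring
        _ ≤ 2 * (n:ℝ)^2 := by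
            have hnn : (0:ℝ) ≤ ∑ i : Fin n, ∑ j : Fin n, (inner ℝ (q i) (q j) : ℝ) := by
              have hsum : ∑ i : Fin n, ∑ j : Fin n, (inner ℝ (q i) (q j) : ℝ)
                  = (inner ℝ (∑ i : Fin n, q i) (∑ j : Fin n, q j) : ℝ) := by
                rw [sum_inner]
                apply Finset.sum_congr rfl; intro i _
                rw [inner_sum]
              rw [hsum]
              exact real_inner_self_nonneg
            linarith
    linarith
  have hstep : (1/(-s)) * ((n:ℝ) * ((n:ℝ) - 1) / 2) - (X/(-s)) * T
      ≤ ∑ i : Fin n, ∑ j : Fin n, (if i < j then Vpair s ‖q i - q j‖ else 0) := by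
    rw [← sum_ind_lt n, hTdef]
    simp only [Finset.mul_sum, ← Finset.sum_sub_distrib]
    apply Finset.sum_le_sum; intro i _
    apply Finset.sum_le_sum; intro j _
    split_ifs with h
    · have hring : 1/(-s) * 1 - X/(-s) * ‖q i - q j‖^2 = (1 - X * ‖q i - q j‖^2) / (-s) := by
        ring
      rw [hring]
      exact pair i j
    · simp
  have hC : (0:ℝ) < 2 / ((n:ℝ) * ((n:ℝ) - 1)) := by positivity
  have hchain : (1/(-s)) * ((n:ℝ) * ((n:ℝ) - 1) / 2) - (X/(-s)) * ((n:ℝ)^2)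
      ≤ ∑ i : Fin n, ∑ j : Fin n, (if i < j then Vpair s ‖q i - q j‖ else 0) := by
    have hcoef : 0 ≤ X/(-s) := by positivity
    nlinarith [hTbound, hstep]
  rw [avgE]
  have hfin := mul_le_mul_of_nonneg_left hchain hC.le
  refine le_trans (le_of_eq ?_) hfin
  have h2X : (2:ℝ) ^ (-s - 1) = 2 * X := by
    rw [hX, show -s - 1 = 1 + (-s - 2) from by ring, Real.rpow_add two_pos, Real.rpow_one]
  rw [h2X]
  have hne1 : (n:ℝ) ≠ 0 := by linarith
  have hne2 : (n:ℝ) - 1 ≠ 0 := by linarith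
  field_simp
  ring

end LowerBound

section Upper

lemma avgE_cfg (s : ℝ) (M : ℕ) (δ : ℝ) :
    avgE s (M+M) (cfg M δ) = 2 / (((M+M : ℕ):ℝ) * (((M+M : ℕ):ℝ) - 1)) *
      ∑ i : Fin (M+M), ∑ j : Fin (M+M), (if i < j then
        Vpair s (Real.sqrt (2 + (if (i.val < M) = (j.val < M) then (-2:ℝ) else 2)
          * Real.cos (δ * (theta M i - theta M j)))) else 0) := by
  rw [avgE]
  congr 1
  apply Finset.sum_congr rfl; intro i _; apply Finset.sum_congr rfl; intro j _
  rw [cfg_dist]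

lemma cont_avg (s : ℝ) (hs0 : s ≠ 0) (hsneg : 0 ≤ -s) (M : ℕ) :
    Continuous fun δ : ℝ => avgE s (M+M) (cfg M δ) := by
  have h : (fun δ : ℝ => avgE s (M+M) (cfg M δ))
      = fun δ : ℝ => 2 / (((M+M : ℕ):ℝ) * (((M+M : ℕ):ℝ) - 1)) *
      ∑ i : Fin (M+M), ∑ j : Fin (M+M), (if i < j then
        Vpair s (Real.sqrt (2 + (if (i.val < M) = (j.val < M) then (-2:ℝ) else 2)
          * Real.cos (δ * (theta M i - theta M j)))) else 0) := by
    funext δ; rw [avgE_cfg]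
  rw [h]
  apply Continuous.mul continuous_const
  apply continuous_finset_sum; intro i _
  apply continuous_finset_sum; intro j _
  by_cases hij : i < j
  · simp only [if_pos hij]
    exact contVsqrt s hs0 hsneg _ _
  · simp only [if_neg hij]
    exact continuous_const

lemma avg_zero (s : ℝ) (hs : s < -2) (M : ℕ) (hM : 1 ≤ M) :
    avgE s (M+M) (cfg M 0)
      = (1 / s) * (((2:ℝ) ^ (-s - 1) - 1) * ((M:ℝ)+M) + 1) / (((M:ℝ)+M) - 1) := by
  have hs0 : s ≠ 0 := by linarith
  rw [avgE_cfg]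
  have hterm : ∀ i j : Fin (M+M), (if i < j then
        Vpair s (Real.sqrt (2 + (if (i.val < M) = (j.val < M) then (-2:ℝ) else 2)
          * Real.cos ((0:ℝ) * (theta M i - theta M j)))) else 0)
      = (if i < j then (if (i.val < M) = (j.val < M) then (-1/s)
          else ((2:ℝ)^(-s) - 1)/s) else 0) := by
    intro i j
    by_cases h : i < j
    · rw [if_pos h, if_pos h]
      by_cases h2 : (i.val < M) = (j.val < M)
      · rw [if_pos h2, if_pos h2, zero_mul, Real.cos_zero,
          show (2:ℝ) + (-2) * 1 = 0 from by norm_num, Real.sqrt_zero, Vpair_zero s hs0]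
      · rw [if_neg h2, if_neg h2, zero_mul, Real.cos_zero,
          show (2:ℝ) + 2 * 1 = 4 from by norm_num,
          show Real.sqrt 4 = 2 from by
            rw [show (4:ℝ) = 2^2 from by norm_num, Real.sqrt_sq (by norm_num : (0:ℝ) ≤ 2)],
          Vpair_two s hs0]
    · rw [if_neg h, if_neg h]
  simp only [hterm]
  rw [count_sum]
  have hMr : (1:ℝ) ≤ (M:ℝ) := by exact_mod_cast hM
  have h2X : (2:ℝ) ^ (-s) = 2 * (2:ℝ) ^ (-s - 1) := by
    have h := Real.rpow_add two_pos 1 (-s - 1)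
    rw [show (1:ℝ) + (-s - 1) = -s from by ring, Real.rpow_one] at h
    exact h
  rw [h2X]
  have hcast : ((M+M : ℕ):ℝ) = (M:ℝ) + M := by push_cast; ring
  rw [hcast]
  have hne1 : (M:ℝ) + M ≠ 0 := by linarith
  have hne2 : (M:ℝ) + M - 1 ≠ 0 := by linarith
  field_simp
  ring

end Upper

theorem stmt7 (s : ℝ) (hs : s < -2) (N : ℕ) (hN : 2 ≤ N) (hNe : Even N) :
    vmin s N = (1 / s) * (((2 : ℝ) ^ (-s - 1) - 1) * (N : ℝ) + 1) / ((N : ℝ) - 1) ∧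
    vmin s N = -(1 / |s|) * (((2 : ℝ) ^ (|s| - 1) - 1) * (N : ℝ) + 1) / ((N : ℝ) - 1) := by
  have hs0 : s ≠ 0 := by linarith
  obtain ⟨M, rfl⟩ := hNe
  have hM : 1 ≤ M := by omega
  have hMr : (1:ℝ) ≤ (M:ℝ) := by exact_mod_cast hM
  have hMpos : (0:ℝ) < (M:ℝ) := by linarith
  set E₀ : ℝ := (1 / s) * (((2 : ℝ) ^ (-s - 1) - 1) * ((M+M : ℕ) : ℝ) + 1)
      / (((M+M : ℕ) : ℝ) - 1) with hE₀
  have hmain : vmin s (M+M) = E₀ := by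
    rw [vmin]
    have hbdd : BddBelow { E : ℝ | ∃ q : Fin (M+M) → EuclideanSpace ℝ (Fin 3),
        (∀ i, ‖q i‖ = 1) ∧ Function.Injective q ∧ E = avgE s (M+M) q } := by
      refine ⟨E₀, ?_⟩
      rintro E ⟨q, hq, hinj, rfl⟩
      exact lower_bound s hs (M+M) hN q hq
    have hmem : ∀ δ : ℝ, 0 < δ → δ * M ≤ π/2 →
        avgE s (M+M) (cfg M δ) ∈ { E : ℝ | ∃ q : Fin (M+M) → EuclideanSpace ℝ (Fin 3),
          (∀ i, ‖q i‖ = 1) ∧ Function.Injective q ∧ E = avgE s (M+M) q } := by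
      intro δ h0 h1
      exact ⟨cfg M δ, cfg_norm M δ, cfg_inj M δ h0 h1, rfl⟩
    have hF0 : avgE s (M+M) (cfg M 0) = E₀ := by
      rw [avg_zero s hs M hM, hE₀]
      have hcast : ((M+M : ℕ):ℝ) = (M:ℝ) + M := by push_cast; ring
      rw [hcast]
    apply le_antisymm
    · apply le_of_forall_pos_le_add
      intro ε hε
      have hc := (cont_avg s hs0 (by linarith) M).continuousAt (x := 0)
      rw [Metric.continuousAt_iff] at hc
      obtain ⟨δ₀, hδ₀, hball⟩ := hc ε hε
      have hπ : 0 < π/(2*(M:ℝ)) := div_pos Real.pi_pos (by linarith)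
      set δ : ℝ := min (δ₀/2) (π/(2*(M:ℝ))) with hδ
      have hδpos : 0 < δ := lt_min (by linarith) hπ
      have hδM : δ * M ≤ π/2 := by
        calc δ * M ≤ (π/(2*(M:ℝ))) * M := by
              apply mul_le_mul_of_nonneg_right (min_le_right _ _) (by linarith)
          _ = π/2 := by field_simp
      have hdist : dist δ (0:ℝ) < δ₀ := by
        rw [Real.dist_eq, sub_zero, abs_of_pos hδpos]
        calc δ ≤ δ₀/2 := min_le_left _ _
          _ < δ₀ := by linarith
      have hval := hball hdist
      rw [Real.dist_eq, hF0] at hval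
      have habs := abs_lt.mp hval
      have hsmall : avgE s (M+M) (cfg M δ) < E₀ + ε := by linarith [habs.2]
      exact le_trans (csInf_le hbdd (hmem δ hδpos hδM)) hsmall.le
    · apply le_csInf
      · refine ⟨avgE s (M+M) (cfg M (π/(2*(M:ℝ)))), hmem _ (div_pos Real.pi_pos (by linarith)) ?_⟩
        rw [div_mul_eq_mul_div]
        rw [show π * (M:ℝ) / (2 * M) = π/2 * (M / M) from by ring, div_self (by linarith : (M:ℝ) ≠ 0)]
        simp
      · rintro E ⟨q, hq, hinj, rfl⟩
        exact lower_bound s hs (M+M) hN q hq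
  refine ⟨hmain, ?_⟩
  rw [hmain, hE₀, abs_of_neg (show s < 0 from by linarith)]
  ring
end

section
/- For every integer N ≥ 2 and all real numbers s > t, the minimal average standardized Riesz pair-energy is strictly increasing in the Riesz parameter: v_s(N) > v_t(N). -/
open scoped BigOperators

lemma Vpair_one (s : ℝ) : Vpair s 1 = 0 := by
  unfold Vpair; split <;> simp

lemma hasDerivAt_Vpair (s : ℝ) {r : ℝ} (hr : 0 < r) :
    HasDerivAt (fun x => Vpair s x) (-(r ^ (-s - 1))) r := by
  by_cases hs : s = 0
  · subst hs
    have h := (Real.hasDerivAt_log hr.ne').neg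
    have : (fun x => Vpair 0 x) = fun x => -Real.log x := by
      funext x; simp [Vpair]
    rw [this]
    rw [neg_zero, zero_sub, Real.rpow_neg_one]; exact h
  · have h1 : HasDerivAt (fun x : ℝ => x ^ (-s)) (-s * r ^ (-s - 1)) r :=
      Real.hasDerivAt_rpow_const (Or.inl hr.ne')
    have h2 := (h1.sub_const 1).div_const s
    have : (fun x => Vpair s x) = fun x => (x ^ (-s) - 1) / s := by
      funext x; simp [Vpair, hs]
    rw [this]
    have e : -(r ^ (-s - 1)) = -s * r ^ (-s - 1) / s := by
      rw [mul_div_right_comm, neg_div, div_self hs]; ring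
    rw [e]; exact h2

lemma strictAntiOn_Vpair (s : ℝ) : StrictAntiOn (Vpair s) (Set.Ioi 0) := by
  apply strictAntiOn_of_deriv_neg (convex_Ioi 0)
  · intro x hx
    exact ((hasDerivAt_Vpair s hx).continuousAt).continuousWithinAt
  · intro x hx
    rw [interior_Ioi] at hx
    rw [(hasDerivAt_Vpair s hx).deriv]
    exact neg_neg_iff_pos.mpr (Real.rpow_pos_of_pos hx _)

lemma antitoneOn_Vpair (s : ℝ) : AntitoneOn (Vpair s) (Set.Ioi 0) :=
  (strictAntiOn_Vpair s).antitoneOn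

lemma Vpair_neg {s r : ℝ} (hr : 1 < r) : Vpair s r < 0 := by
  have := strictAntiOn_Vpair s (Set.mem_Ioi.2 one_pos) (Set.mem_Ioi.2 (lt_trans one_pos hr)) hr
  rwa [Vpair_one] at this

noncomputable def Dfun (s t r : ℝ) : ℝ := Vpair s r - Vpair t r

lemma hasDerivAt_Dfun (s t : ℝ) {r : ℝ} (hr : 0 < r) :
    HasDerivAt (fun x => Dfun s t x) (r ^ (-t - 1) - r ^ (-s - 1)) r := by
  have h := (hasDerivAt_Vpair s hr).sub (hasDerivAt_Vpair t hr)
  have e : r ^ (-t - 1) - r ^ (-s - 1) = -(r ^ (-s - 1)) - -(r ^ (-t - 1)) := by ring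
  rw [e]; exact h

lemma strictAntiOn_Dfun {s t : ℝ} (h : t < s) : StrictAntiOn (Dfun s t) (Set.Ioc 0 1) := by
  apply strictAntiOn_of_deriv_neg (convex_Ioc 0 1)
  · intro x hx
    exact ((hasDerivAt_Dfun s t hx.1).continuousAt).continuousWithinAt
  · intro x hx
    rw [interior_Ioc] at hx
    rw [(hasDerivAt_Dfun s t hx.1).deriv]
    have : x ^ (-t - 1) < x ^ (-s - 1) :=
      Real.rpow_lt_rpow_of_exponent_gt hx.1 hx.2 (by linarith)
    linarith

lemma strictMonoOn_Dfun {s t : ℝ} (h : t < s) : StrictMonoOn (Dfun s t) (Set.Ici 1) := by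
  apply strictMonoOn_of_deriv_pos (convex_Ici 1)
  · intro x hx
    exact ((hasDerivAt_Dfun s t (lt_of_lt_of_le one_pos hx)).continuousAt).continuousWithinAt
  · intro x hx
    rw [interior_Ici] at hx
    rw [(hasDerivAt_Dfun s t (lt_trans one_pos hx)).deriv]
    have : x ^ (-s - 1) < x ^ (-t - 1) :=
      Real.rpow_lt_rpow_of_exponent_lt hx (by linarith)
    linarith

lemma Dfun_one (s t : ℝ) : Dfun s t 1 = 0 := by simp [Dfun, Vpair_one]

lemma Dfun_nonneg {s t : ℝ} (h : t < s) {r : ℝ} (hr : 0 < r) : 0 ≤ Dfun s t r := by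
  rcases le_or_gt r 1 with h1 | h1
  · have := (strictAntiOn_Dfun h).antitoneOn ⟨hr, h1⟩ ⟨one_pos, le_refl 1⟩ h1
    rwa [Dfun_one] at this
  · have := (strictMonoOn_Dfun h).monotoneOn (Set.mem_Ici.2 (le_refl 1)) (Set.mem_Ici.2 h1.le) h1.le
    rwa [Dfun_one] at this

lemma Dfun_pos_left {s t : ℝ} (h : t < s) {η r : ℝ} (hη : 0 < η) (hη1 : η < 1)
    (hr : 0 < r) (hle : r ≤ 1 - η) : 0 < Dfun s t (1 - η) ∧ Dfun s t (1 - η) ≤ Dfun s t r := by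
  constructor
  · have := strictAntiOn_Dfun h (a := 1 - η) (b := 1) ⟨by linarith, by linarith⟩ ⟨one_pos, le_refl 1⟩ (by linarith)
    rwa [Dfun_one] at this
  · exact (strictAntiOn_Dfun h).antitoneOn ⟨hr, by linarith⟩ ⟨by linarith, by linarith⟩ hle

lemma Dfun_pos_right {s t : ℝ} (h : t < s) {η r : ℝ} (hη : 0 < η)
    (hle : 1 + η ≤ r) : 0 < Dfun s t (1 + η) ∧ Dfun s t (1 + η) ≤ Dfun s t r := by
  constructor
  · have := strictMonoOn_Dfun h (a := 1) (b := 1 + η) (Set.mem_Ici.2 (le_refl 1)) (Set.mem_Ici.2 (by linarith)) (by linarith)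
    rwa [Dfun_one] at this
  · exact (strictMonoOn_Dfun h).monotoneOn (Set.mem_Ici.2 (by linarith)) (Set.mem_Ici.2 (by linarith)) hle

lemma continuousAt_Vpair_one (s : ℝ) : ContinuousAt (fun r => Vpair s r) 1 := by
  by_cases hs : s = 0
  · subst hs
    have : (fun r => Vpair 0 r) = fun r => -Real.log r := by funext x; simp [Vpair]
    rw [this]
    exact (Real.continuousAt_log one_ne_zero).neg
  · have : (fun r => Vpair s r) = fun r => (r ^ (-s) - 1) / s := by funext x; simp [Vpair, hs]
    rw [this]
    exact (((Real.continuousAt_rpow_const 1 (-s) (Or.inl one_ne_zero)).sub continuousAt_const).div_const s)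

lemma pair_count (N : ℕ) :
    (∑ i : Fin N, ∑ j : Fin N, if i < j then (1:ℝ) else 0) = (N * (N - 1) : ℝ) / 2 := by
  have key : (∑ i : Fin N, ∑ j : Fin N, ((if i < j then (1:ℝ) else 0)
      + (if j < i then (1:ℝ) else 0) + (if i = j then (1:ℝ) else 0))) = (N : ℝ) * N := by
    have : ∀ i j : Fin N, ((if i < j then (1:ℝ) else 0)
        + (if j < i then (1:ℝ) else 0) + (if i = j then (1:ℝ) else 0)) = 1 := by
      intro i j
      rcases lt_trichotomy i j with h | h | h
      · simp [h, asymm h, ne_of_lt h]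
      · simp [h]
      · simp [h, asymm h, (ne_of_lt h).symm]
    simp only [this]
    simp [Finset.sum_const, Finset.card_univ, mul_comm]
  have hswap : (∑ i : Fin N, ∑ j : Fin N, if j < i then (1:ℝ) else 0)
      = (∑ i : Fin N, ∑ j : Fin N, if i < j then (1:ℝ) else 0) := Finset.sum_comm
  have hdiag : (∑ i : Fin N, ∑ j : Fin N, if i = j then (1:ℝ) else 0) = (N : ℝ) := by
    simp [Finset.sum_ite_eq]
  simp only [Finset.sum_add_distrib] at key
  rw [hswap, hdiag] at key
  have : (N:ℝ) * N - N = N * (N-1) := by ring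
  linarith

lemma avgE_ge (s : ℝ) (N : ℕ) (hN : 2 ≤ N) (q : Fin N → EuclideanSpace ℝ (Fin 3)) (B : ℝ)
    (hB : ∀ i j : Fin N, i < j → B ≤ Vpair s ‖q i - q j‖) : B ≤ avgE s N q := by
  have hN1 : (1:ℝ) ≤ (N:ℝ) - 1 := by
    have : (2:ℝ) ≤ N := by exact_mod_cast hN
    linarith
  have hNpos : 0 < (N:ℝ) * ((N:ℝ) - 1) := by nlinarith
  have hsum : (∑ i : Fin N, ∑ j : Fin N, if i < j then B else 0)
      ≤ ∑ i : Fin N, ∑ j : Fin N, if i < j then Vpair s ‖q i - q j‖ else 0 := by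
    apply Finset.sum_le_sum; intro i _
    apply Finset.sum_le_sum; intro j _
    split_ifs with hij
    · exact hB i j hij
    · exact le_refl 0
  have hconst : (∑ i : Fin N, ∑ j : Fin N, if i < j then B else 0)
      = B * ((N * (N - 1) : ℝ) / 2) := by
    rw [← pair_count N]
    rw [Finset.mul_sum]
    congr 1; funext i
    rw [Finset.mul_sum]
    congr 1; funext j
    split_ifs <;> ring
  unfold avgE
  calc B = 2 / ((N:ℝ) * ((N:ℝ) - 1)) * (B * ((N * (N - 1) : ℝ) / 2)) := by
        field_simp
    _ ≤ _ := by
        apply mul_le_mul_of_nonneg_left _ (by positivity)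
        rw [← hconst]; exact hsum

lemma avgE_le (s : ℝ) (N : ℕ) (hN : 2 ≤ N) (q : Fin N → EuclideanSpace ℝ (Fin 3)) (B : ℝ)
    (hB : ∀ i j : Fin N, i < j → Vpair s ‖q i - q j‖ ≤ B) : avgE s N q ≤ B := by
  have hN1 : (1:ℝ) ≤ (N:ℝ) - 1 := by
    have : (2:ℝ) ≤ N := by exact_mod_cast hN
    linarith
  have hsum : (∑ i : Fin N, ∑ j : Fin N, if i < j then Vpair s ‖q i - q j‖ else 0)
      ≤ ∑ i : Fin N, ∑ j : Fin N, if i < j then B else 0 := by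
    apply Finset.sum_le_sum; intro i _
    apply Finset.sum_le_sum; intro j _
    split_ifs with hij
    · exact hB i j hij
    · exact le_refl 0
  have hconst : (∑ i : Fin N, ∑ j : Fin N, if i < j then B else 0)
      = B * ((N * (N - 1) : ℝ) / 2) := by
    rw [← pair_count N, Finset.mul_sum]
    congr 1; funext i
    rw [Finset.mul_sum]
    congr 1; funext j
    split_ifs <;> ring
  unfold avgE
  calc 2 / ((N:ℝ) * ((N:ℝ) - 1)) * (∑ i : Fin N, ∑ j : Fin N, if i < j then Vpair s ‖q i - q j‖ else 0)
      ≤ 2 / ((N:ℝ) * ((N:ℝ) - 1)) * (B * ((N * (N - 1) : ℝ) / 2)) := by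
        apply mul_le_mul_of_nonneg_left _ (by positivity)
        rw [← hconst]; exact hsum
    _ = B := by field_simp

lemma avgE_sub_eq (s t : ℝ) (N : ℕ) (q : Fin N → EuclideanSpace ℝ (Fin 3)) :
    avgE s N q - avgE t N q = 2 / ((N : ℝ) * ((N : ℝ) - 1)) *
      ∑ i : Fin N, ∑ j : Fin N, if i < j then Dfun s t ‖q i - q j‖ else 0 := by
  unfold avgE
  rw [← mul_sub, ← Finset.sum_sub_distrib]
  congr 1
  apply Finset.sum_congr rfl; intro i _
  rw [← Finset.sum_sub_distrib]
  apply Finset.sum_congr rfl; intro j _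
  split_ifs <;> simp [Dfun]

lemma avgE_gap (s t : ℝ) (ht : t < s) (N : ℕ) (hN : 2 ≤ N)
    (q : Fin N → EuclideanSpace ℝ (Fin 3))
    (hpos : ∀ i j : Fin N, i < j → 0 < ‖q i - q j‖)
    (c : ℝ) (hc0 : 0 ≤ c) (i0 j0 : Fin N) (hij : i0 < j0)
    (hc : c ≤ Dfun s t ‖q i0 - q j0‖) :
    avgE t N q + 2 / ((N:ℝ) * ((N:ℝ) - 1)) * c ≤ avgE s N q := by
  have hN1 : (1:ℝ) ≤ (N:ℝ) - 1 := by
    have : (2:ℝ) ≤ N := by exact_mod_cast hN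
    linarith
  have hterm : ∀ i j : Fin N, 0 ≤ (if i < j then Dfun s t ‖q i - q j‖ else 0) := by
    intro i j; split_ifs with hij'
    · exact Dfun_nonneg ht (hpos i j hij')
    · exact le_refl 0
  have hsum : c ≤ ∑ i : Fin N, ∑ j : Fin N, if i < j then Dfun s t ‖q i - q j‖ else 0 := by
    have h1 : (if i0 < j0 then Dfun s t ‖q i0 - q j0‖ else 0)
        ≤ ∑ j : Fin N, if i0 < j then Dfun s t ‖q i0 - q j‖ else 0 :=
      Finset.single_le_sum (fun j _ => hterm i0 j) (Finset.mem_univ j0)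
    have h2 : (∑ j : Fin N, if i0 < j then Dfun s t ‖q i0 - q j‖ else 0)
        ≤ ∑ i : Fin N, ∑ j : Fin N, if i < j then Dfun s t ‖q i - q j‖ else 0 :=
      Finset.single_le_sum (fun i _ => Finset.sum_nonneg (fun j _ => hterm i j)) (Finset.mem_univ i0)
    rw [if_pos hij] at h1
    linarith
  have := avgE_sub_eq s t N q
  nlinarith [mul_le_mul_of_nonneg_left hsum (show (0:ℝ) ≤ 2 / ((N:ℝ) * ((N:ℝ) - 1)) by positivity)]

lemma avgE_mono (s t : ℝ) (ht : t < s) (N : ℕ) (hN : 2 ≤ N)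
    (q : Fin N → EuclideanSpace ℝ (Fin 3))
    (hpos : ∀ i j : Fin N, i < j → 0 < ‖q i - q j‖) :
    avgE t N q ≤ avgE s N q := by
  have hN1 : (1:ℝ) ≤ (N:ℝ) - 1 := by
    have : (2:ℝ) ≤ N := by exact_mod_cast hN
    linarith
  have hterm : ∀ i j : Fin N, 0 ≤ (if i < j then Dfun s t ‖q i - q j‖ else 0) := by
    intro i j; split_ifs with hij'
    · exact Dfun_nonneg ht (hpos i j hij')
    · exact le_refl 0
  have hsum : 0 ≤ ∑ i : Fin N, ∑ j : Fin N, if i < j then Dfun s t ‖q i - q j‖ else 0 :=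
    Finset.sum_nonneg fun i _ => Finset.sum_nonneg fun j _ => hterm i j
  have := avgE_sub_eq s t N q
  nlinarith [mul_nonneg (show (0:ℝ) ≤ 2 / ((N:ℝ) * ((N:ℝ) - 1)) by positivity) hsum]


noncomputable def sphPt (a : ℝ) : EuclideanSpace ℝ (Fin 3) :=
  (Real.sqrt (1 + a^2))⁻¹ • (WithLp.equiv 2 (Fin 3 → ℝ)).symm ![1, a, 0]

lemma sphPt_apply (a : ℝ) (i : Fin 3) :
    sphPt a i = (Real.sqrt (1 + a^2))⁻¹ * ![1, a, 0] i := by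
  simp [sphPt]

lemma sphPt_norm (a : ℝ) : ‖sphPt a‖ = 1 := by
  have h0 : (0:ℝ) < 1 + a^2 := by positivity
  have hs : Real.sqrt (1 + a^2) > 0 := Real.sqrt_pos.2 h0
  rw [EuclideanSpace.norm_eq]
  have : ∀ i : Fin 3, ‖sphPt a i‖^2 = ((Real.sqrt (1 + a^2))⁻¹)^2 * (![1, a, 0] i)^2 := by
    intro i
    rw [sphPt_apply, Real.norm_eq_abs, sq_abs, mul_pow]
  rw [Fin.sum_univ_three]
  rw [this 0, this 1, this 2]
  have hsq : ((Real.sqrt (1 + a^2))⁻¹)^2 = (1 + a^2)⁻¹ := by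
    rw [← Real.sqrt_inv, Real.sq_sqrt (by positivity)]
  simp only [Matrix.cons_val_zero, Matrix.cons_val_one, Matrix.head_cons]
  rw [hsq]
  have : (1 + a ^ 2)⁻¹ * 1 ^ 2 + (1 + a ^ 2)⁻¹ * a ^ 2 + (1 + a ^ 2)⁻¹ * (![1, a, 0] 2) ^ 2 = 1 := by
    have h2 : (![1, a, 0] : Fin 3 → ℝ) 2 = 0 := rfl
    rw [h2]
    field_simp
    ring
  rw [this, Real.sqrt_one]

lemma sphPt_injective : Function.Injective sphPt := by
  intro a b hab
  have h0 : ∀ c : ℝ, (0:ℝ) < Real.sqrt (1 + c^2) := fun c => Real.sqrt_pos.2 (by positivity)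
  have e0 : sphPt a 0 = sphPt b 0 := by rw [hab]
  have e1 : sphPt a 1 = sphPt b 1 := by rw [hab]
  rw [sphPt_apply, sphPt_apply] at e0 e1
  simp only [Matrix.cons_val_zero, Matrix.cons_val_one, Matrix.head_cons, mul_one] at e0 e1
  have ha := (h0 a).ne'
  have hb := (h0 b).ne'
  rw [inv_eq_iff_eq_inv] at e0
  have : Real.sqrt (1 + a^2) = Real.sqrt (1 + b^2) := by
    rw [e0, inv_inv]
  rw [this] at e1
  exact mul_left_cancel₀ (inv_ne_zero hb) e1

lemma exists_inj_config (N : ℕ) :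
    ∃ q : Fin N → EuclideanSpace ℝ (Fin 3), (∀ i, ‖q i‖ = 1) ∧ Function.Injective q := by
  refine ⟨fun i => sphPt (i : ℕ), fun i => sphPt_norm _, ?_⟩
  intro i j hij
  have := sphPt_injective hij
  have : (i : ℕ) = (j : ℕ) := by exact_mod_cast this
  exact Fin.ext this

lemma dist_pos_of_inj {N : ℕ} {q : Fin N → EuclideanSpace ℝ (Fin 3)}
    (hinj : Function.Injective q) {i j : Fin N} (hij : i < j) : 0 < ‖q i - q j‖ := by
  rw [norm_pos_iff, sub_ne_zero]
  exact fun h => (ne_of_lt hij) (hinj h)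

lemma dist_le_two {N : ℕ} {q : Fin N → EuclideanSpace ℝ (Fin 3)}
    (hn : ∀ i, ‖q i‖ = 1) (i j : Fin N) : ‖q i - q j‖ ≤ 2 := by
  calc ‖q i - q j‖ ≤ ‖q i‖ + ‖q j‖ := norm_sub_le _ _
    _ = 2 := by rw [hn i, hn j]; norm_num

lemma avgE_ge_V2 (s : ℝ) (N : ℕ) (hN : 2 ≤ N) (q : Fin N → EuclideanSpace ℝ (Fin 3))
    (hn : ∀ i, ‖q i‖ = 1) (hinj : Function.Injective q) : Vpair s 2 ≤ avgE s N q := by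
  apply avgE_ge s N hN q _ ?_
  intro i j hij
  exact antitoneOn_Vpair s (Set.mem_Ioi.2 (dist_pos_of_inj hinj hij))
    (Set.mem_Ioi.2 two_pos) (dist_le_two hn i j)

lemma bddBelow_config (s : ℝ) (N : ℕ) (hN : 2 ≤ N) :
    BddBelow { E : ℝ | ∃ q : Fin N → EuclideanSpace ℝ (Fin 3),
      (∀ i, ‖q i‖ = 1) ∧ Function.Injective q ∧ E = avgE s N q } := by
  refine ⟨Vpair s 2, ?_⟩
  rintro E ⟨q, hn, hinj, rfl⟩
  exact avgE_ge_V2 s N hN q hn hinj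

lemma vmin_le (s : ℝ) (N : ℕ) (hN : 2 ≤ N) (q : Fin N → EuclideanSpace ℝ (Fin 3))
    (hn : ∀ i, ‖q i‖ = 1) (hinj : Function.Injective q) : vmin s N ≤ avgE s N q :=
  csInf_le (bddBelow_config s N hN) ⟨q, hn, hinj, rfl⟩

lemma le_vmin (s : ℝ) (N : ℕ) (B : ℝ)
    (hB : ∀ q : Fin N → EuclideanSpace ℝ (Fin 3),
      (∀ i, ‖q i‖ = 1) → Function.Injective q → B ≤ avgE s N q) : B ≤ vmin s N := by
  obtain ⟨q0, hn0, hinj0⟩ := exists_inj_config N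
  have hne : { E : ℝ | ∃ q : Fin N → EuclideanSpace ℝ (Fin 3),
      (∀ i, ‖q i‖ = 1) ∧ Function.Injective q ∧ E = avgE s N q }.Nonempty :=
    ⟨avgE s N q0, q0, hn0, hinj0, rfl⟩
  apply le_csInf hne
  rintro E ⟨q, hn, hinj, rfl⟩
  exact hB q hn hinj


lemma four_points_contra (v : Fin 4 → EuclideanSpace ℝ (Fin 3))
    (hn : ∀ i, ‖v i‖ = 1) (hd : ∀ i j, i ≠ j → ‖v i - v j‖ = 1) : False := by
  have hinner : ∀ i j : Fin 4, i ≠ j → (inner ℝ (v i) (v j) : ℝ) = 1/2 := by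
    intro i j hij
    have h := norm_sub_sq_real (v i) (v j)
    rw [hd i j hij, hn i, hn j] at h
    simp only [one_pow] at h
    linarith
  have hself : ∀ i : Fin 4, (inner ℝ (v i) (v i) : ℝ) = 1 := by
    intro i
    rw [real_inner_self_eq_norm_sq, hn i]; norm_num
  have hli : LinearIndependent ℝ v := by
    rw [Fintype.linearIndependent_iff]
    intro g hg
    have key : ∀ j : Fin 4, g j = -(∑ i : Fin 4, g i) := by
      intro j
      have h0 : (inner ℝ (v j) (∑ i : Fin 4, g i • v i) : ℝ) = 0 := by
        rw [hg, inner_zero_right]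
      rw [inner_sum] at h0
      have hterm : ∀ i : Fin 4, (inner ℝ (v j) (g i • v i) : ℝ)
          = g i / 2 + (if j = i then g i / 2 else 0) := by
        intro i
        rw [real_inner_smul_right]
        by_cases h : j = i
        · subst h; rw [hself j, if_pos rfl]; ring
        · rw [hinner j i h, if_neg h]; ring
      rw [Finset.sum_congr rfl (fun i _ => hterm i), Finset.sum_add_distrib] at h0
      simp only [Finset.sum_ite_eq, Finset.mem_univ, if_true] at h0
      rw [← Finset.sum_div] at h0
      linarith
    have hsum0 : (∑ i : Fin 4, g i) = (4:ℝ) * (-(∑ i : Fin 4, g i)) := by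
      conv_lhs => rw [Finset.sum_congr rfl (fun j (_ : j ∈ Finset.univ) => key j)]
      rw [Finset.sum_const, Finset.card_univ]
      simp
    have hS : (∑ i : Fin 4, g i) = 0 := by linarith
    intro i
    rw [key i, hS, neg_zero]
  have hcard := hli.fintype_card_le_finrank
  rw [finrank_euclideanSpace_fin] at hcard
  norm_num at hcard


lemma exists_eta (N : ℕ) (hN : 4 ≤ N) : ∃ η : ℝ, 0 < η ∧ η ≤ 1/2 ∧
    ∀ q : Fin N → EuclideanSpace ℝ (Fin 3), (∀ i, ‖q i‖ = 1) →
      ∃ i j : Fin N, i < j ∧ η ≤ |‖q i - q j‖ - 1| := by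
  classical
  set E3 := EuclideanSpace ℝ (Fin 3)
  set K : Set (Fin N → E3) := Set.univ.pi (fun _ => Metric.sphere (0 : E3) 1) with hK
  have hKc : IsCompact K := isCompact_univ_pi (fun _ => isCompact_sphere 0 1)
  set F : (Fin N → E3) → ℝ := fun q =>
    ∑ i : Fin N, ∑ j : Fin N, if i < j then (‖q i - q j‖ - 1)^2 else 0 with hF
  have hFc : Continuous F := by
    apply continuous_finset_sum
    intro i _
    apply continuous_finset_sum
    intro j _
    by_cases hij : i < j
    · simp only [if_pos hij]
      exact (((continuous_apply i).sub (continuous_apply j)).norm.sub continuous_const).pow 2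
    · simp only [if_neg hij]
      exact continuous_const
  obtain ⟨q0, hn0, _⟩ := exists_inj_config N
  have hq0K : q0 ∈ K := by
    intro i _
    rw [mem_sphere_zero_iff_norm]
    exact hn0 i
  obtain ⟨qm, hqmK, hmin⟩ := hKc.exists_isMinOn ⟨q0, hq0K⟩ hFc.continuousOn
  set μ := F qm with hμ
  have hμ0 : 0 ≤ μ :=
    Finset.sum_nonneg fun i _ => Finset.sum_nonneg fun j _ => by positivity
  have hμpos : 0 < μ := by
    rcases lt_or_eq_of_le hμ0 with h | h
    · exact h
    · exfalso
      have hz : ∀ i j : Fin N, i < j → ‖qm i - qm j‖ = 1 := by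
        intro i j hij
        have h1 : ∀ i ∈ (Finset.univ : Finset (Fin N)),
            (0:ℝ) ≤ ∑ j : Fin N, if i < j then (‖qm i - qm j‖ - 1)^2 else 0 :=
          fun i _ => Finset.sum_nonneg fun j _ => by positivity
        have h2 := (Finset.sum_eq_zero_iff_of_nonneg h1).1 h.symm i (Finset.mem_univ i)
        have h3 : ∀ j ∈ (Finset.univ : Finset (Fin N)),
            (0:ℝ) ≤ if i < j then (‖qm i - qm j‖ - 1)^2 else 0 :=
          fun j _ => by positivity
        have h4 := (Finset.sum_eq_zero_iff_of_nonneg h3).1 h2 j (Finset.mem_univ j)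
        rw [if_pos hij] at h4
        have := pow_eq_zero_iff (n := 2) (by norm_num) |>.1 h4
        linarith
      have hzz : ∀ i j : Fin N, i ≠ j → ‖qm i - qm j‖ = 1 := by
        intro i j hij
        rcases lt_or_gt_of_ne hij with h' | h'
        · exact hz i j h'
        · rw [norm_sub_rev]; exact hz j i h'
      have hnm : ∀ i, ‖qm i‖ = 1 := by
        intro i
        have := hqmK i (Set.mem_univ i)
        rwa [mem_sphere_zero_iff_norm] at this
      refine four_points_contra (fun k => qm (Fin.castLE (by omega) k)) (fun k => hnm _) ?_
      intro k l hkl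
      apply hzz
      simp only [ne_eq, Fin.ext_iff, Fin.coe_castLE]
      exact fun hc => hkl (Fin.ext hc)
  refine ⟨min (Real.sqrt (μ / (2 * (N:ℝ)^2))) (1/2), ?_, min_le_right _ _, ?_⟩
  · apply lt_min
    · apply Real.sqrt_pos.2
      have : (0:ℝ) < (N:ℝ)^2 := by positivity
      positivity
    · norm_num
  · intro q hq
    by_contra hcon
    push_neg at hcon
    have hqK : q ∈ K := by
      intro i _
      rw [mem_sphere_zero_iff_norm]
      exact hq i
    have hle : F qm ≤ F q := hmin hqK
    have hNpos : (0:ℝ) < (N:ℝ)^2 := by positivity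
    have hbound : ∀ i j : Fin N, (if i < j then (‖q i - q j‖ - 1)^2 else 0) ≤ μ / (2 * (N:ℝ)^2) := by
      intro i j
      have hc : (0:ℝ) ≤ μ / (2 * (N:ℝ)^2) := by positivity
      split_ifs with hij
      · have h5 := hcon i j hij
        have h6 : |‖q i - q j‖ - 1| < Real.sqrt (μ / (2 * (N:ℝ)^2)) :=
          lt_of_lt_of_le h5 (min_le_left _ _)
        have h7 : (‖q i - q j‖ - 1)^2 < (Real.sqrt (μ / (2 * (N:ℝ)^2)))^2 := by
          rw [← sq_abs]
          apply sq_lt_sq' _ h6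
          linarith [abs_nonneg (‖q i - q j‖ - 1)]
        rw [Real.sq_sqrt (by positivity : (0:ℝ) ≤ μ / (2 * (N:ℝ)^2))] at h7
        exact h7.le
      · exact hc
    have hFq : F q ≤ (N:ℝ)^2 * (μ / (2 * (N:ℝ)^2)) := by
      calc F q ≤ ∑ _i : Fin N, ∑ _j : Fin N, μ / (2 * (N:ℝ)^2) := by
            apply Finset.sum_le_sum; intro i _
            apply Finset.sum_le_sum; intro j _
            exact hbound i j
        _ = (N:ℝ)^2 * (μ / (2 * (N:ℝ)^2)) := by
            simp [Finset.sum_const, Finset.card_univ, nsmul_eq_mul]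
            ring
    have : (N:ℝ)^2 * (μ / (2 * (N:ℝ)^2)) = μ / 2 := by field_simp
    rw [this] at hFq
    linarith


lemma norm_single_sub_single :
    ‖(EuclideanSpace.single 0 (1:ℝ) : EuclideanSpace ℝ (Fin 3)) - EuclideanSpace.single 1 (1:ℝ)‖
      = Real.sqrt 2 := by
  rw [EuclideanSpace.norm_eq]
  congr 1
  rw [Fin.sum_univ_three]
  simp [PiLp.sub_apply, EuclideanSpace.single_apply]
  norm_num

lemma norm_neg_single_sub_single :
    ‖(-EuclideanSpace.single 0 (1:ℝ) : EuclideanSpace ℝ (Fin 3)) - EuclideanSpace.single 1 (1:ℝ)‖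
      = Real.sqrt 2 := by
  rw [EuclideanSpace.norm_eq]
  congr 1
  rw [Fin.sum_univ_three]
  simp [PiLp.sub_apply, PiLp.neg_apply, EuclideanSpace.single_apply]
  norm_num

lemma norm_single_add_single :
    ‖(EuclideanSpace.single 0 (1:ℝ) : EuclideanSpace ℝ (Fin 3)) + EuclideanSpace.single 0 (1:ℝ)‖
      = 2 := by
  rw [← two_smul ℝ, norm_smul]
  simp [EuclideanSpace.norm_single]

lemma sqrt_two_le_two : Real.sqrt 2 ≤ 2 := by
  have h1 : Real.sqrt 2 ≤ Real.sqrt 4 := Real.sqrt_le_sqrt (by norm_num)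
  have h2 : Real.sqrt 4 = 2 := by
    rw [show (4:ℝ) = 2^2 by norm_num, Real.sqrt_sq (by norm_num : (0:ℝ) ≤ 2)]
  linarith

lemma small_config (N : ℕ) (hN2 : 2 ≤ N) (hN4 : N < 4) :
    ∃ Q : Fin N → EuclideanSpace ℝ (Fin 3), (∀ i, ‖Q i‖ = 1) ∧
      ∀ i j : Fin N, i < j → Real.sqrt 2 ≤ ‖Q i - Q j‖ := by
  have hnu : ‖(EuclideanSpace.single 0 (1:ℝ) : EuclideanSpace ℝ (Fin 3))‖ = 1 := by
    simp [EuclideanSpace.norm_single]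
  have hnw : ‖(EuclideanSpace.single 1 (1:ℝ) : EuclideanSpace ℝ (Fin 3))‖ = 1 := by
    simp [EuclideanSpace.norm_single]
  interval_cases N
  · refine ⟨![EuclideanSpace.single 0 (1:ℝ), -EuclideanSpace.single 0 (1:ℝ)], ?_, ?_⟩
    · intro i; fin_cases i
      · simpa using hnu
      · simpa using hnu
    · intro i j hij
      fin_cases i <;> fin_cases j <;>
        first
          | exact absurd hij (by decide)
          | (simp only []
             show Real.sqrt 2 ≤ _
             simp
             first
               | (rw [norm_single_add_single]; exact sqrt_two_le_two)
               | (rw [norm_single_sub_single])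
               | (rw [norm_neg_single_sub_single]))
  · refine ⟨![EuclideanSpace.single 0 (1:ℝ), -EuclideanSpace.single 0 (1:ℝ),
      EuclideanSpace.single 1 (1:ℝ)], ?_, ?_⟩
    · intro i; fin_cases i
      · simpa using hnu
      · simpa using hnu
      · simpa using hnw
    · intro i j hij
      fin_cases i <;> fin_cases j <;>
        first
          | exact absurd hij (by decide)
          | (show Real.sqrt 2 ≤ _
             simp
             first
               | (rw [norm_single_add_single]; exact sqrt_two_le_two)
               | (rw [norm_single_sub_single])
               | (rw [norm_neg_single_sub_single])
               | skip)


theorem stmt9 (N : ℕ) (hN : 2 ≤ N) (s t : ℝ) (h : t < s) :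
    vmin t N < vmin s N := by
  have hN1 : (1:ℝ) ≤ (N:ℝ) - 1 := by
    have : (2:ℝ) ≤ N := by exact_mod_cast hN
    linarith
  have hpref : 0 < 2 / ((N:ℝ) * ((N:ℝ) - 1)) := by positivity
  rcases le_or_gt 4 N with h4 | h4
  · -- N ≥ 4 : uniform gap
    obtain ⟨η, hη0, hη12, hηprop⟩ := exists_eta N h4
    have hη1 : η < 1 := by linarith
    set c := min (Dfun s t (1 - η)) (Dfun s t (1 + η)) with hc
    have hc0 : 0 < c := lt_min
      ((Dfun_pos_left h hη0 hη1 (by linarith) (le_refl (1 - η))).1)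
      ((Dfun_pos_right h hη0 (le_refl (1 + η))).1)
    set γ := 2 / ((N:ℝ) * ((N:ℝ) - 1)) * c with hγ
    have hγ0 : 0 < γ := by positivity
    have hstep : vmin t N + γ ≤ vmin s N := by
      apply le_vmin
      intro q hn hinj
      obtain ⟨i, j, hij, habs⟩ := hηprop q hn
      have hrpos : 0 < ‖q i - q j‖ := dist_pos_of_inj hinj hij
      have hd : c ≤ Dfun s t ‖q i - q j‖ := by
        rcases le_abs.1 habs with h' | h'
        · exact le_trans (min_le_right _ _)
            (Dfun_pos_right h hη0 (by linarith)).2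
        · exact le_trans (min_le_left _ _)
            (Dfun_pos_left h hη0 hη1 hrpos (by linarith)).2
      have hgap := avgE_gap s t h N hN q
        (fun i' j' hij' => dist_pos_of_inj hinj hij') c hc0.le i j hij hd
      have hmt := vmin_le t N hN q hn hinj
      calc vmin t N + γ ≤ avgE t N q + γ := by linarith
        _ ≤ avgE s N q := hgap
    linarith
  · -- N ∈ {2, 3}
    obtain ⟨Q, hQn, hQd⟩ := small_config N hN h4
    have hs2pos : (0:ℝ) < Real.sqrt 2 := Real.sqrt_pos.2 (by norm_num)
    have h1s2 : (1:ℝ) < Real.sqrt 2 := by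
      rw [show (1:ℝ) = Real.sqrt 1 by rw [Real.sqrt_one]]
      exact Real.sqrt_lt_sqrt (by norm_num) (by norm_num)
    have hQpos : ∀ i j : Fin N, i < j → 0 < ‖Q i - Q j‖ :=
      fun i j hij => lt_of_lt_of_le hs2pos (hQd i j hij)
    have hQinj : Function.Injective Q := by
      intro i j hij
      by_contra hne
      rcases lt_or_gt_of_ne (show i ≠ j from hne) with h' | h'
      · have := hQpos i j h'
        rw [hij, sub_self, norm_zero] at this
        exact lt_irrefl 0 this
      · have := hQpos j i h'
        rw [hij, sub_self, norm_zero] at this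
        exact lt_irrefl 0 this
    have hA : avgE s N Q ≤ Vpair s (Real.sqrt 2) := by
      apply avgE_le s N hN Q
      intro i j hij
      exact antitoneOn_Vpair s (Set.mem_Ioi.2 hs2pos)
        (Set.mem_Ioi.2 (hQpos i j hij)) (hQd i j hij)
    have hV2neg : Vpair s (Real.sqrt 2) < 0 := Vpair_neg h1s2
    -- choose η with Vpair s (1+η) > Vpair s √2
    have hev : ∀ᶠ r in nhds (1:ℝ), Vpair s (Real.sqrt 2) < Vpair s r := by
      have hc := continuousAt_Vpair_one s
      have h0 : Vpair s (Real.sqrt 2) < Vpair s 1 := by rw [Vpair_one]; exact hV2neg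
      exact hc.eventually (eventually_gt_nhds h0)
    obtain ⟨δ, hδ0, hδ⟩ := Metric.eventually_nhds_iff.1 hev
    set η := min (δ/2) (1/2) with hηdef
    have hη0 : 0 < η := lt_min (by linarith) (by norm_num)
    have hη12 : η ≤ 1/2 := min_le_right _ _
    have hη1 : η < 1 := by linarith
    have hVη : Vpair s (Real.sqrt 2) < Vpair s (1 + η) := by
      apply hδ
      have : |1 + η - 1| = η := by
        rw [add_sub_cancel_left, abs_of_pos hη0]
      rw [Real.dist_eq, this]
      calc η ≤ δ/2 := min_le_left _ _
        _ < δ := by linarith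
    set c := min (Dfun s t (1 - η)) (Dfun s t (1 + η)) with hc
    have hc0 : 0 < c := lt_min
      ((Dfun_pos_left h hη0 hη1 (by linarith) (le_refl (1 - η))).1)
      ((Dfun_pos_right h hη0 (le_refl (1 + η))).1)
    set γ := 2 / ((N:ℝ) * ((N:ℝ) - 1)) * c with hγ
    have hγ0 : 0 < γ := by positivity
    have hvt : vmin t N ≤ avgE t N Q := vmin_le t N hN Q hQn hQinj
    have hts : avgE t N Q ≤ avgE s N Q := avgE_mono s t h N hN Q hQpos
    set B := min (vmin t N + γ) (Vpair s (1 + η)) with hB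
    have hstep : B ≤ vmin s N := by
      apply le_vmin
      intro q hn hinj
      by_cases hex : ∃ i j : Fin N, i < j ∧
          (‖q i - q j‖ ≤ 1 - η ∨ 1 + η ≤ ‖q i - q j‖)
      · obtain ⟨i, j, hij, hor⟩ := hex
        have hrpos : 0 < ‖q i - q j‖ := dist_pos_of_inj hinj hij
        have hd : c ≤ Dfun s t ‖q i - q j‖ := by
          rcases hor with h' | h'
          · exact le_trans (min_le_left _ _)
              (Dfun_pos_left h hη0 hη1 hrpos h').2
          · exact le_trans (min_le_right _ _)
              (Dfun_pos_right h hη0 h').2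
        have hgap := avgE_gap s t h N hN q
          (fun i' j' hij' => dist_pos_of_inj hinj hij') c hc0.le i j hij hd
        have hmt := vmin_le t N hN q hn hinj
        calc B ≤ vmin t N + γ := min_le_left _ _
          _ ≤ avgE t N q + γ := by linarith
          _ ≤ avgE s N q := hgap
      · push_neg at hex
        have hall : ∀ i j : Fin N, i < j → ‖q i - q j‖ ≤ 1 + η := by
          intro i j hij
          have := hex i j hij
          linarith [this.2]
        calc B ≤ Vpair s (1 + η) := min_le_right _ _
          _ ≤ avgE s N q := by
            apply avgE_ge s N hN q
            intro i j hij
            exact antitoneOn_Vpair s (Set.mem_Ioi.2 (dist_pos_of_inj hinj hij))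
              (Set.mem_Ioi.2 (by linarith)) (hall i j hij)
    have hBgt : vmin t N < B := by
      apply lt_min
      · linarith
      · calc vmin t N ≤ avgE t N Q := hvt
          _ ≤ avgE s N Q := hts
          _ ≤ Vpair s (Real.sqrt 2) := hA
          _ < Vpair s (1 + η) := hVη
    linarith
end
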